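/- Let X ⊆ ℝ^m and Y ⊆ ℝ^n be nonempty compact convex sets. Let f₀ : ℝ^n → ℝ, f₁ : ℝ^m → ℝ, h : ℝ^n → ℝ^p, k : ℝ^m → ℝ^p be convex and differentiable (componentwise for h and k), and define 𝒬(x) = inf { f₀(y) + f₁(x) : y ∈ Y, h(y) + k(x) ≤ 0 } and θ_x(μ) = inf_{y ∈ Y} { f₀(y) + f₁(x) + μᵀ(h(y) + k(x)) } for μ ∈ ℝ₊^p. Assume for every x ∈ X there exists y_x ∈ Y (in the relative interior of Y when Y is not polyhedral) with h(y_x) + k(x) < 0, and that θ_{x̄} is strongly concave with constant α_D(x̄) > 0 for ‖·‖₂ on a convex set D_{x̄} ⊆ ℝ₊^p containing all optimal solutions of sup_{μ ≥ 0} θ_{x̄}(μ). Fix x̄ ∈ X and ε ≥ 0; let ŷ ∈ Y with h(ŷ) + k(x̄) ≤ 0 and f₀(ŷ) + f₁(x̄) ≤ 𝒬(x̄) + ε, and let μ̂ ∈ D_{x̄}, μ̂ ≥ 0, with θ_{x̄}(μ̂) ≥ 𝒬(x̄) − ε. Set U = max_{i=1,…,p} ‖∇k_i(x̄)‖₂ and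 η(ε, x̄) = ε + U · Diam(X) · sqrt(2εp/α_D(x̄)). Then the affine function C(x) = f₀(ŷ) + f₁(x̄) − η(ε, x̄) + ⟨∇f₁(x̄) + Σ_{i=1}^p μ̂_i ∇k_i(x̄), x − x̄⟩ satisfies 𝒬(x) ≥ C(x) for every x ∈ X, and 𝒬(x̄) − C(x̄) ≤ η(ε, x̄). -/

import Mathlib

open scoped RealInnerProductSpace Matrix
noncomputable section

/-- `ℝ^k` with the Euclidean norm. -/
abbrev E (k : ℕ) := EuclideanSpace ℝ (Fin k)

/-- A polyhedral set: a finite intersection of closed half-spaces. -/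
def IsPolyhedral {k : ℕ} (s : Set (E k)) : Prop :=
  ∃ (r : ℕ) (c : Fin r → E k) (d : Fin r → ℝ), s = {x : E k | ∀ i, ⟪c i, x⟫ ≤ d i}

/-- Strong concavity with constant `α` w.r.t. `‖·‖₂` on a set, at points where the function
is finite. -/
def StrongConcaveOnE {k : ℕ} (C : Set (E k)) (α : ℝ) (θ : E k → EReal) : Prop :=
  ∀ ⦃u⦄, u ∈ C → θ u ≠ ⊤ → θ u ≠ ⊥ → ∀ ⦃v⦄, v ∈ C → θ v ≠ ⊤ → θ v ≠ ⊥ →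
    ∀ t ∈ Set.Icc (0:ℝ) 1,
      ((t * (θ u).toReal + (1 - t) * (θ v).toReal
          + α * t * (1 - t) / 2 * ‖u - v‖ ^ 2 : ℝ) : EReal) ≤ θ (t • u + (1 - t) • v)

/-- The value function `𝒬(x) = inf { f₀(y) + f₁(x) : y ∈ Y, h(y) + k(x) ≤ 0 }`. -/
def QvarSep {n m p : ℕ} (Y : Set (E n)) (f₀ : E n → ℝ) (f₁ : E m → ℝ)
    (h : Fin p → E n → ℝ) (k : Fin p → E m → ℝ) (x : E m) : EReal :=
  ⨅ (y : E n) (_ : y ∈ Y) (_ : ∀ i, h i y + k i x ≤ 0), ((f₀ y + f₁ x : ℝ) : EReal)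

/-- The dual function `θ_x(μ) = inf_{y ∈ Y} { f₀(y) + f₁(x) + μᵀ(h(y) + k(x)) }`. -/
def thetaSep {n m p : ℕ} (Y : Set (E n)) (f₀ : E n → ℝ) (f₁ : E m → ℝ)
    (h : Fin p → E n → ℝ) (k : Fin p → E m → ℝ) (x : E m) (mu : E p) : EReal :=
  ⨅ (y : E n) (_ : y ∈ Y),
    ((f₀ y + f₁ x + ∑ i, mu i * (h i y + k i x) : ℝ) : EReal)

/-! ### Auxiliary machinery -/

/-- The Lagrangian. -/
def Lag {n m p : ℕ} (f₀ : E n → ℝ) (f₁ : E m → ℝ)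
    (h : Fin p → E n → ℝ) (k : Fin p → E m → ℝ) (x : E m) (mu : E p) (y : E n) : ℝ :=
  f₀ y + f₁ x + ∑ i, mu i * (h i y + k i x)

/-- Gradient inequality for convex differentiable functions. -/
lemma grad_ineq {m : ℕ} {f : E m → ℝ} (hc : ConvexOn ℝ Set.univ f) (hd : Differentiable ℝ f)
    (a b : E m) : f a + ⟪gradient f a, b - a⟫ ≤ f b := by
  set L : ℝ → E m := fun t => AffineMap.lineMap a b t with hL
  have hline : ConvexOn ℝ Set.univ (f ∘ L) := by
    have := hc.comp_affineMap (AffineMap.lineMap a b)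
    simpa [hL, Function.comp] using this
  have hLd : HasDerivAt L (b - a) 0 := by
    simpa using (AffineMap.lineMap a b : ℝ →ᵃ[ℝ] E m).hasDerivAt (x := (0:ℝ))
  have hfd : HasFDerivAt f (InnerProductSpace.toDual ℝ (E m) (gradient f a)) a :=
    (hd a).hasGradientAt.hasFDerivAt
  have hcomp : HasDerivAt (f ∘ L) ⟪gradient f a, b - a⟫ 0 := by
    have h0 : L 0 = a := by simp [hL]
    rw [← h0] at hfd
    have := hfd.comp_hasDerivAt 0 hLd
    simpa [h0, InnerProductSpace.toDual_apply_apply] using this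
  have hs := hline.le_slope_of_hasDerivAt (Set.mem_univ 0) (Set.mem_univ 1) one_pos hcomp
  have : slope (f ∘ L) 0 1 = f b - f a := by
    simp [slope, hL, Function.comp]
  rw [this] at hs
  linarith

section Aux
open Set
variable {n m p : ℕ} {Y : Set (E n)} {f₀ : E n → ℝ} {f₁ : E m → ℝ}
  {h : Fin p → E n → ℝ} {k : Fin p → E m → ℝ} {x : E m} {mu : E p}

lemma thetaSep_le {y : E n} (hy : y ∈ Y) :
    thetaSep Y f₀ f₁ h k x mu ≤ ((Lag f₀ f₁ h k x mu y : ℝ) : EReal) :=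
  iInf₂_le y hy

lemma le_thetaSep {c : EReal} (hyp : ∀ y ∈ Y, c ≤ ((Lag f₀ f₁ h k x mu y : ℝ) : EReal)) :
    c ≤ thetaSep Y f₀ f₁ h k x mu :=
  le_iInf₂ hyp

lemma Lag_continuous (hf₀ : Continuous f₀) (hh : ∀ i, Continuous (h i)) :
    Continuous (Lag f₀ f₁ h k x mu) := by
  unfold Lag
  refine (hf₀.add continuous_const).add (continuous_finset_sum _ fun i _ => ?_)
  exact continuous_const.mul ((hh i).add continuous_const)

lemma thetaSep_attained (hYcp : IsCompact Y) (hYne : Y.Nonempty)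
    (hf₀ : Continuous f₀) (hh : ∀ i, Continuous (h i)) :
    ∃ y₀ ∈ Y, thetaSep Y f₀ f₁ h k x mu = ((Lag f₀ f₁ h k x mu y₀ : ℝ) : EReal) ∧
      ∀ y ∈ Y, Lag f₀ f₁ h k x mu y₀ ≤ Lag f₀ f₁ h k x mu y := by
  obtain ⟨y₀, hy₀, hmin⟩ := hYcp.exists_isMinOn hYne ((Lag_continuous hf₀ hh).continuousOn)
  exact ⟨y₀, hy₀, le_antisymm (thetaSep_le hy₀)
    (le_thetaSep fun y hy => EReal.coe_le_coe_iff.mpr (hmin hy)), fun y hy => hmin hy⟩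

lemma thetaSep_coe_toReal (hYcp : IsCompact Y) (hYne : Y.Nonempty)
    (hf₀ : Continuous f₀) (hh : ∀ i, Continuous (h i)) :
    thetaSep Y f₀ f₁ h k x mu = (((thetaSep Y f₀ f₁ h k x mu).toReal : ℝ) : EReal) := by
  obtain ⟨y₁, hy₁, heq, _⟩ := thetaSep_attained (f₁ := f₁) (k := k) (x := x) (mu := mu)
    hYcp hYne hf₀ hh
  rw [heq]; simp

lemma QvarSep_le {y : E n} (hy : y ∈ Y) (hfeas : ∀ i, h i y + k i x ≤ 0) :
    QvarSep Y f₀ f₁ h k x ≤ ((f₀ y + f₁ x : ℝ) : EReal) := by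
  refine (iInf_le _ y).trans ?_
  rw [iInf_pos hy, iInf_pos hfeas]

lemma le_QvarSep {c : EReal}
    (hyp : ∀ y ∈ Y, (∀ i, h i y + k i x ≤ 0) → c ≤ ((f₀ y + f₁ x : ℝ) : EReal)) :
    c ≤ QvarSep Y f₀ f₁ h k x :=
  le_iInf fun y => le_iInf fun hy => le_iInf fun hf => hyp y hy hf

/-- Weak duality. -/
lemma theta_le_Qvar (hmu : ∀ i, 0 ≤ mu i) :
    thetaSep Y f₀ f₁ h k x mu ≤ QvarSep Y f₀ f₁ h k x := by
  refine le_QvarSep fun y hy hfeas => (thetaSep_le hy).trans ?_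
  refine EReal.coe_le_coe_iff.mpr ?_
  have : ∑ i, mu i * (h i y + k i x) ≤ 0 :=
    Finset.sum_nonpos fun i _ => mul_nonpos_of_nonneg_of_nonpos (hmu i) (hfeas i)
  unfold Lag; linarith

lemma euclid_norm_le_sum_abs (u : E p) : ‖u‖ ≤ ∑ i, |u i| := by
  have h2fst : u = ∑ i, u i • EuclideanSpace.single i (1:ℝ) := by
    have := (EuclideanSpace.basisFun (Fin p) ℝ).sum_repr u
    simp only [EuclideanSpace.basisFun_repr, EuclideanSpace.basisFun_apply] at this
    exact this.symm
  calc ‖u‖ = ‖∑ i, u i • EuclideanSpace.single i (1:ℝ)‖ := by rw [← h2fst]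
    _ ≤ ∑ i, ‖u i • EuclideanSpace.single i (1:ℝ)‖ := norm_sum_le _ _
    _ = ∑ i, |u i| := by
        refine Finset.sum_congr rfl fun i _ => ?_
        rw [norm_smul, EuclideanSpace.norm_single]
        simp

lemma sum_mul_eq_inner (a b : E p) : ∑ i, a i * b i = ⟪a, b⟫ := by
  rw [PiLp.inner_apply]
  simp [RCLike.inner_apply, conj_trivial]
  exact Finset.sum_congr rfl fun i _ => mul_comm _ _
lemma approx_strong_duality {xb : E m} (hYcv : Convex ℝ Y)
    (hf₀c : ConvexOn ℝ Set.univ f₀) (hhc : ∀ i, ConvexOn ℝ Set.univ (h i))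
    {y₀ : E n} (hy₀ : y₀ ∈ Y) (hslater : ∀ i, h i y₀ + k i xb < 0)
    {q : ℝ} (hq : QvarSep Y f₀ f₁ h k xb = (q : EReal))
    {γ : ℝ} (hγ : 0 < γ) :
    ∃ mu : E p, (∀ i, 0 ≤ mu i) ∧
      ((q - γ : ℝ) : EReal) ≤ thetaSep Y f₀ f₁ h k xb mu := by
  classical
  set v : E n → E p := fun y => WithLp.toLp 2 (fun i => h i y + k i xb) with hv
  set r : E n → ℝ := fun y => f₀ y + f₁ xb with hr
  set B : Set (E p × ℝ) := {z | ∃ y ∈ Y, (∀ i, v y i < z.1 i) ∧ r y < z.2} with hB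
  -- B is open
  have hBopen : IsOpen B := by
    rw [isOpen_iff_forall_mem_open]
    rintro z ⟨y, hy, hlt, hrz⟩
    refine ⟨(⋂ i, {w : E p × ℝ | v y i < w.1 i}) ∩ {w : E p × ℝ | r y < w.2},
      ?_, ?_, ?_⟩
    · rintro w ⟨h1, h2⟩
      exact ⟨y, hy, fun i => mem_iInter.mp h1 i, h2⟩
    · exact (isOpen_iInter_of_finite fun i => isOpen_lt continuous_const
        ((EuclideanSpace.proj i).continuous.comp continuous_fst)).inter
        (isOpen_lt continuous_const continuous_snd)
    · exact ⟨mem_iInter.mpr hlt, hrz⟩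
  -- B is convex
  have hBconv : Convex ℝ B := by
    rintro z ⟨y, hy, hlt, hrz⟩ z' ⟨y', hy', hlt', hrz'⟩ a b ha hb hab
    rcases eq_or_lt_of_le ha with rfl|ha'
    · simp only [zero_smul, zero_add]
      have hb1 : b = 1 := by linarith
      subst hb1
      exact ⟨y', hy', by simpa using hlt', by simpa using hrz'⟩
    rcases eq_or_lt_of_le hb with rfl|hb'
    · simp only [zero_smul, add_zero]
      have ha1 : a = 1 := by linarith
      subst ha1
      exact ⟨y, hy, by simpa using hlt, by simpa using hrz⟩
    refine ⟨a • y + b • y', hYcv hy hy' ha hb hab, fun i => ?_, ?_⟩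
    · have hconv := (hhc i).2 (mem_univ y) (mem_univ y') ha hb hab
      have hk1 : a * k i xb + b * k i xb = k i xb := by rw [← add_mul, hab, one_mul]
      have : h i (a • y + b • y') + k i xb ≤ a * (v y i) + b * (v y' i) := by
        simp only [smul_eq_mul] at hconv
        simp only [hv, PiLp.toLp_apply]
        linarith [hconv, hk1]
      refine this.trans_lt ?_
      have h1 : a * v y i < a * z.1 i := by exact mul_lt_mul_of_pos_left (hlt i) ha'
      have h2 : b * v y' i < b * z'.1 i := by exact mul_lt_mul_of_pos_left (hlt' i) hb'
      have : (a • z + b • z').1 i = a * z.1 i + b * z'.1 i := by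
        simp [Prod.fst_add, PiLp.add_apply, PiLp.smul_apply, smul_eq_mul]
      rw [this]; linarith
    · have hconv := hf₀c.2 (mem_univ y) (mem_univ y') ha hb hab
      simp only [smul_eq_mul] at hconv
      have : (a • z + b • z').2 = a * z.2 + b * z'.2 := by simp [smul_eq_mul]
      rw [this]
      have h1 : a * r y < a * z.2 := mul_lt_mul_of_pos_left hrz ha'
      have h2 : b * r y' < b * z'.2 := mul_lt_mul_of_pos_left hrz' hb'
      have hk1 : a * f₁ xb + b * f₁ xb = f₁ xb := by rw [← add_mul, hab, one_mul]
      simp only [hr] at h1 h2 ⊢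
      linarith [hconv, hk1]
  -- the point is not in B
  have hpt : ((0 : E p), q - γ) ∉ B := by
    rintro ⟨y, hy, hlt, hrz⟩
    have hfeas : ∀ i, h i y + k i xb ≤ 0 := fun i => by
      have := hlt i; simp only [hv] at this; simpa using this.le
    have hQle := QvarSep_le (f₀ := f₀) (f₁ := f₁) hy hfeas
    rw [hq] at hQle
    have : q ≤ f₀ y + f₁ xb := by exact_mod_cast hQle
    simp only [hr] at hrz
    linarith
  obtain ⟨f', hf'⟩ := geometric_hahn_banach_open_point hBconv hBopen hpt
  set c : ℝ := f' (0, 1) with hc_def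
  set w : Fin p → ℝ := fun i => f' (EuclideanSpace.single i (1:ℝ), 0) with hw_def
  set oneE : E p := WithLp.toLp 2 (fun _ => (1:ℝ)) with honeE
  -- decomposition of f'
  have hdecomp : ∀ (u : E p) (t : ℝ), f' (u, t) = (∑ i, u i * w i) + t * c := by
    intro u t
    have h2 : (u, t) = (∑ i, u i • (EuclideanSpace.single i (1:ℝ), (0:ℝ)))
        + t • ((0 : E p), (1:ℝ)) := by
      have h2fst : u = ∑ i, u i • EuclideanSpace.single i (1:ℝ) := by
        have := (EuclideanSpace.basisFun (Fin p) ℝ).sum_repr u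
        simp only [EuclideanSpace.basisFun_repr, EuclideanSpace.basisFun_apply] at this
        exact this.symm
      refine Prod.ext ?_ ?_
      · simp only [Prod.fst_add, Prod.fst_sum, Prod.smul_fst, smul_zero, add_zero]
        exact h2fst
      · simp only [Prod.snd_add, Prod.snd_sum, Prod.smul_snd, smul_eq_mul, mul_zero,
          mul_one, Finset.sum_const_zero, zero_add]
    rw [h2, map_add, map_sum, map_smul]
    simp only [map_smul, smul_eq_mul]
    rfl
  -- key inequality for all y ∈ Y
  have hkey : ∀ y ∈ Y, f' (v y, r y) ≤ f' (0, q - γ) := by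
    intro y hy
    have htend : Filter.Tendsto (fun s : ℝ => f' (v y + s • oneE, r y + s)) (nhdsWithin 0 (Set.Ioi 0))
        (nhds (f' (v y, r y))) := by
      have hcont : Continuous (fun s : ℝ => f' (v y + s • oneE, r y + s)) := by
        refine f'.continuous.comp ?_
        exact (continuous_const.add (continuous_id.smul continuous_const)).prodMk
          (continuous_const.add continuous_id)
      have := hcont.tendsto 0
      simp only [zero_smul, add_zero] at this
      exact this.mono_left nhdsWithin_le_nhds
    refine le_of_tendsto htend ?_
    filter_upwards [self_mem_nhdsWithin] with s hs
    refine (hf' _ ⟨y, hy, fun i => ?_, ?_⟩).le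
    · show v y i < (v y + s • oneE) i
      have : (v y + s • oneE) i = v y i + s * 1 := by
        simp [PiLp.add_apply, PiLp.smul_apply, honeE, smul_eq_mul]
      rw [this]; simpa using (lt_add_of_pos_right (v y i) (by simpa using hs : (0:ℝ) < s * 1))
    · exact lt_add_of_pos_right _ hs
  -- auxiliary membership family
  have hmem1 : ∀ t : ℝ, 0 < t → ((v y₀ + oneE : E p), r y₀ + t) ∈ B := by
    intro t ht
    refine ⟨y₀, hy₀, fun i => ?_, lt_add_of_pos_right _ ht⟩
    show v y₀ i < (v y₀ + oneE) i
    have : (v y₀ + oneE) i = v y₀ i + 1 := by simp [PiLp.add_apply, honeE]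
    rw [this]; linarith
  -- c ≤ 0
  have hcle : c ≤ 0 := by
    by_contra hcpos
    push_neg at hcpos
    have hlin : ∀ t : ℝ, 0 < t →
        f' ((v y₀ + oneE : E p), r y₀) + t * c < f' (0, q - γ) := by
      intro t ht
      have := hf' _ (hmem1 t ht)
      have heq : ((v y₀ + oneE : E p), r y₀ + t)
          = ((v y₀ + oneE : E p), r y₀) + t • ((0 : E p), (1:ℝ)) := by
        refine Prod.ext ?_ ?_ <;> simp
      rw [heq, map_add, map_smul, smul_eq_mul] at this
      exact this
    set A := f' (0, q - γ) - f' ((v y₀ + oneE : E p), r y₀) with hA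
    have hAt : ∀ t : ℝ, 0 < t → t * c < A := fun t ht => by
      have := hlin t ht; simp only [hA]; linarith
    have ht0 : (0:ℝ) < (|A| + 1) / c := div_pos (by positivity) hcpos
    have := hAt _ ht0
    rw [div_mul_cancel₀ _ (ne_of_gt hcpos)] at this
    have : A ≤ |A| := le_abs_self A
    linarith [hAt _ ht0, le_abs_self A,
      (div_mul_cancel₀ (|A|+1) (ne_of_gt hcpos) : (|A|+1)/c*c = |A|+1)]
  -- w i ≤ 0
  have hwle : ∀ i, w i ≤ 0 := by
    intro i
    by_contra hwpos
    push_neg at hwpos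
    have hmemi : ∀ t : ℝ, 0 < t →
        ((v y₀ + oneE + t • EuclideanSpace.single i (1:ℝ) : E p), r y₀ + 1) ∈ B := by
      intro t ht
      refine ⟨y₀, hy₀, fun j => ?_, lt_add_of_pos_right _ one_pos⟩
      show v y₀ j < (v y₀ + oneE + t • EuclideanSpace.single i (1:ℝ)) j
      have : (v y₀ + oneE + t • EuclideanSpace.single i (1:ℝ)) j
          = v y₀ j + 1 + t * (EuclideanSpace.single i (1:ℝ) j) := by
        simp [PiLp.add_apply, PiLp.smul_apply, honeE, smul_eq_mul]
      rw [this]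
      have hnn : 0 ≤ t * (EuclideanSpace.single i (1:ℝ) j) := by
        refine mul_nonneg ht.le ?_
        rw [EuclideanSpace.single_apply]
        positivity
      linarith
    have hlin : ∀ t : ℝ, 0 < t →
        f' ((v y₀ + oneE : E p), r y₀ + 1) + t * w i < f' (0, q - γ) := by
      intro t ht
      have := hf' _ (hmemi t ht)
      have heq : ((v y₀ + oneE + t • EuclideanSpace.single i (1:ℝ) : E p), r y₀ + 1)
          = ((v y₀ + oneE : E p), r y₀ + 1)
            + t • ((EuclideanSpace.single i (1:ℝ) : E p), (0:ℝ)) := by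
        refine Prod.ext ?_ ?_ <;> simp
      rw [heq, map_add, map_smul, smul_eq_mul] at this
      exact this
    set A := f' (0, q - γ) - f' ((v y₀ + oneE : E p), r y₀ + 1) with hA
    have hAt : ∀ t : ℝ, 0 < t → t * w i < A := fun t ht => by
      have := hlin t ht; simp only [hA]; linarith
    have ht0 : (0:ℝ) < (|A| + 1) / w i := div_pos (by positivity) hwpos
    have h1 := hAt _ ht0
    rw [div_mul_cancel₀ _ (ne_of_gt hwpos)] at h1
    linarith [le_abs_self A]
  -- c < 0
  have hcneg : c < 0 := by
    rcases lt_or_eq_of_le hcle with hlt|heq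
    · exact hlt
    exfalso
    -- c = 0; show all w i = 0, then contradiction with a point of B
    have hkey0 := hkey y₀ hy₀
    rw [hdecomp, hdecomp] at hkey0
    have h00 : (∑ i, (0:E p) i * w i) = (0:ℝ) := by simp
    rw [h00, heq] at hkey0
    simp only [mul_zero, add_zero, zero_add] at hkey0
    have hz : ∀ i ∈ Finset.univ, (0:ℝ) ≤ v y₀ i * w i := by
      intro i _
      have h1 : (0:ℝ) ≤ (-(h i y₀ + k i xb)) * (-(w i)) :=
        mul_nonneg (neg_nonneg.2 (hslater i).le) (neg_nonneg.2 (hwle i))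
      rw [neg_mul_neg] at h1
      have h2 : v y₀ i = h i y₀ + k i xb := rfl
      rw [h2]
      exact h1
    have hsum0 : ∑ i, v y₀ i * w i = 0 :=
      le_antisymm hkey0 (Finset.sum_nonneg hz)
    have hweq : ∀ i, w i = 0 := by
      intro i
      have := (Finset.sum_eq_zero_iff_of_nonneg hz).mp hsum0 i (Finset.mem_univ i)
      rcases mul_eq_zero.mp this with h1|h2
      · exact absurd h1 (ne_of_lt (hslater i))
      · exact h2
    have hmemB := hf' _ (hmem1 1 one_pos)
    rw [hdecomp, hdecomp] at hmemB
    simp [hweq, heq] at hmemB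
  -- define the multiplier
  refine ⟨WithLp.toLp 2 (fun i => w i / c), fun i => ?_, ?_⟩
  · show 0 ≤ w i / c
    rw [div_eq_mul_inv]
    have h1 : (0:ℝ) ≤ (-(w i)) * (-(c⁻¹)) :=
      mul_nonneg (neg_nonneg.2 (hwle i)) (neg_nonneg.2 (inv_nonpos.2 hcneg.le))
    rw [neg_mul_neg] at h1
    exact h1
  · refine le_thetaSep fun y hy => ?_
    refine EReal.coe_le_coe_iff.mpr ?_
    have hkeyy := hkey y hy
    rw [hdecomp, hdecomp] at hkeyy
    have h0 : (∑ i, (0:E p) i * w i) = 0 := by simp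
    rw [h0, zero_add] at hkeyy
    -- hkeyy : ∑ i, v y i * w i + r y * c ≤ (q - γ) * c
    have hdiv : q - γ ≤ (∑ i, v y i * w i) / c + r y := by
      rw [div_add' _ _ _ (ne_of_lt hcneg)]
      rw [le_div_iff_of_neg hcneg]
      linarith
    have heq2 : (∑ i, v y i * w i) / c = ∑ i, (w i / c) * v y i := by
      rw [Finset.sum_div]
      exact Finset.sum_congr rfl fun i _ => by ring
    rw [heq2] at hdiv
    have : Lag f₀ f₁ h k xb (WithLp.toLp 2 (fun i => w i / c)) y
        = r y + ∑ i, (w i / c) * v y i := by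
      simp only [Lag, hr, hv, PiLp.toLp_apply]
    rw [this]
    linarith
/-- Existence of a maximizer of the dual function over the nonnegative orthant. -/
lemma dual_max_exists {xb : E m}
    (hYcp : IsCompact Y) (hYne : Y.Nonempty)
    (hf₀ : Continuous f₀) (hh : ∀ i, Continuous (h i))
    {y₀ : E n} (hy₀ : y₀ ∈ Y) (hslater : ∀ i, h i y₀ + k i xb < 0)
    {muh : E p} (hmuh : ∀ i, 0 ≤ muh i) :
    ∃ mustar : E p, (∀ i, 0 ≤ mustar i) ∧
      ∀ mu' : E p, (∀ i, 0 ≤ mu' i) →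
        thetaSep Y f₀ f₁ h k xb mu' ≤ thetaSep Y f₀ f₁ h k xb mustar := by
  classical
  set θR : E p → ℝ := fun mu => (thetaSep Y f₀ f₁ h k xb mu).toReal with hθR
  have hrep : ∀ mu : E p, thetaSep Y f₀ f₁ h k xb mu = ((θR mu : ℝ) : EReal) := by
    intro mu
    obtain ⟨y₁, hy₁, heq, _⟩ := thetaSep_attained (f₁ := f₁) (k := k) (x := xb) (mu := mu) hYcp hYne hf₀ hh
    rw [heq]; simp [hθR, heq]
  have hθle : ∀ (mu : E p) (y : E n), y ∈ Y → θR mu ≤ Lag f₀ f₁ h k xb mu y := by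
    intro mu y hy
    have := thetaSep_le (f₀ := f₀) (f₁ := f₁) (h := h) (k := k) (x := xb) (mu := mu) hy
    rw [hrep mu] at this
    exact_mod_cast this
  -- bound K for the Lipschitz property
  set vv : E n → E p := fun y => WithLp.toLp 2 (fun i => h i y + k i xb) with hvv
  have hvvcont : Continuous vv := by
    apply (PiLp.continuous_toLp 2 (fun _ : Fin p => ℝ)).comp
    exact continuous_pi fun i => (hh i).add continuous_const
  obtain ⟨yK, hyK, hKmax⟩ := hYcp.exists_isMaxOn hYne (hvvcont.norm.continuousOn)
  set K : ℝ := ‖vv yK‖ with hK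
  have hK0 : 0 ≤ K := norm_nonneg _
  -- one-sided Lipschitz bound
  have hlip1 : ∀ mu mu' : E p, θR mu ≤ θR mu' + K * ‖mu - mu'‖ := by
    intro mu mu'
    obtain ⟨y₁, hy₁, heq, hmin⟩ := thetaSep_attained (f₁ := f₁) (k := k) (x := xb) (mu := mu') hYcp hYne hf₀ hh
    have hθR' : θR mu' = Lag f₀ f₁ h k xb mu' y₁ := by
      simp [hθR, heq]
    have hLag : Lag f₀ f₁ h k xb mu y₁ =
        Lag f₀ f₁ h k xb mu' y₁ + ∑ i, (mu i - mu' i) * vv y₁ i := by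
      simp only [Lag, hvv, PiLp.toLp_apply]
      have hterm : ∀ i ∈ Finset.univ, mu i * (h i y₁ + k i xb)
          = mu' i * (h i y₁ + k i xb) + (mu i - mu' i) * (h i y₁ + k i xb) :=
        fun i _ => by ring
      rw [Finset.sum_congr rfl hterm, Finset.sum_add_distrib]
      ring
    have hinner : ∑ i, (mu i - mu' i) * vv y₁ i = ⟪(mu - mu' : E p), vv y₁⟫ := by
      rw [← sum_mul_eq_inner]
      refine Finset.sum_congr rfl fun i _ => by rw [PiLp.sub_apply]
    have hbd : ∑ i, (mu i - mu' i) * vv y₁ i ≤ K * ‖mu - mu'‖ := by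
      rw [hinner]
      calc ⟪(mu - mu' : E p), vv y₁⟫ ≤ |⟪(mu - mu' : E p), vv y₁⟫| := le_abs_self _
        _ ≤ ‖(mu - mu' : E p)‖ * ‖vv y₁‖ := abs_real_inner_le_norm _ _
        _ ≤ ‖(mu - mu' : E p)‖ * K := by
            refine mul_le_mul_of_nonneg_left ?_ (norm_nonneg _)
            exact hKmax hy₁
        _ = K * ‖mu - mu'‖ := mul_comm _ _
    calc θR mu ≤ Lag f₀ f₁ h k xb mu y₁ := hθle mu y₁ hy₁
      _ = Lag f₀ f₁ h k xb mu' y₁ + ∑ i, (mu i - mu' i) * vv y₁ i := hLag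
      _ ≤ θR mu' + K * ‖mu - mu'‖ := by rw [hθR']; linarith
  have hθcont : Continuous θR := by
    have : LipschitzWith (Real.toNNReal K) θR := by
      refine LipschitzWith.of_dist_le_mul fun mu mu' => ?_
      rw [Real.coe_toNNReal _ hK0, dist_eq_norm, dist_eq_norm, Real.norm_eq_abs, abs_le]
      constructor
      · have := hlip1 mu' mu
        have hsymm : ‖mu' - mu‖ = ‖mu - mu'‖ := norm_sub_rev _ _
        rw [hsymm] at this
        linarith
      · linarith [hlip1 mu mu']
    exact this.continuous
  -- coercivity
  obtain ⟨δ, hδ0, hδ⟩ : ∃ δ : ℝ, 0 < δ ∧ ∀ i, h i y₀ + k i xb ≤ -δ := by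
    rcases isEmpty_or_nonempty (Fin p) with hp|hp
    · exact ⟨1, one_pos, fun i => (hp.false i).elim⟩
    · refine ⟨-(Finset.univ.sup' Finset.univ_nonempty (fun i => h i y₀ + k i xb)), ?_, fun i => ?_⟩
      · rw [neg_pos]
        exact (Finset.sup'_lt_iff Finset.univ_nonempty).mpr fun i _ => hslater i
      · rw [neg_neg]
        exact Finset.le_sup' (fun i => h i y₀ + k i xb) (Finset.mem_univ i)
  set r₀ : ℝ := f₀ y₀ + f₁ xb with hr₀
  have hcoer : ∀ mu : E p, (∀ i, 0 ≤ mu i) → θR mu ≤ r₀ - δ * ‖mu‖ := by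
    intro mu hmu
    have h1 : θR mu ≤ Lag f₀ f₁ h k xb mu y₀ := hθle mu y₀ hy₀
    have h2 : Lag f₀ f₁ h k xb mu y₀ ≤ r₀ - δ * (∑ i, mu i) := by
      simp only [Lag, hr₀]
      have : ∑ i, mu i * (h i y₀ + k i xb) ≤ ∑ i, mu i * (-δ) :=
        Finset.sum_le_sum fun i _ => mul_le_mul_of_nonneg_left (hδ i) (hmu i)
      have h3 : ∑ i, mu i * (-δ) = -δ * ∑ i, mu i := by
        rw [Finset.mul_sum]; exact Finset.sum_congr rfl fun i _ => by ring
      rw [h3] at this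
      linarith
    have h4 : ‖mu‖ ≤ ∑ i, mu i := by
      refine (euclid_norm_le_sum_abs mu).trans (le_of_eq ?_)
      exact Finset.sum_congr rfl fun i _ => abs_of_nonneg (hmu i)
    nlinarith
  -- compact candidate set
  set R : ℝ := max ‖muh‖ ((r₀ - θR muh + 1)/δ) with hR
  set C₀ : Set (E p) := (⋂ i, {mu : E p | 0 ≤ mu i}) ∩ Metric.closedBall 0 R with hC₀
  have hC₀cp : IsCompact C₀ := by
    refine (isCompact_closedBall 0 R).inter_left ?_
    exact isClosed_iInter fun i => isClosed_le continuous_const (EuclideanSpace.proj i).continuous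
  have hmuhC₀ : muh ∈ C₀ := by
    refine ⟨mem_iInter.mpr hmuh, ?_⟩
    rw [Metric.mem_closedBall, dist_zero_right]
    exact le_max_left _ _
  obtain ⟨mustar, hmustarC₀, hmax⟩ := hC₀cp.exists_isMaxOn ⟨muh, hmuhC₀⟩ hθcont.continuousOn
  have hmustar_nn : ∀ i, 0 ≤ mustar i := fun i => mem_iInter.mp hmustarC₀.1 i
  refine ⟨mustar, hmustar_nn, fun mu' hmu' => ?_⟩
  rw [hrep mu', hrep mustar]
  refine EReal.coe_le_coe_iff.mpr ?_
  by_cases hcase : ‖mu'‖ ≤ R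
  · exact hmax ⟨mem_iInter.mpr hmu', by rwa [Metric.mem_closedBall, dist_zero_right]⟩
  · push_neg at hcase
    have h1 : θR mu' ≤ r₀ - δ * ‖mu'‖ := hcoer mu' hmu'
    have h2 : θR muh ≤ θR mustar := hmax hmuhC₀
    have h3 : (r₀ - θR muh + 1)/δ ≤ R := le_max_right _ _
    have h4 : r₀ - θR muh + 1 ≤ δ * R := by
      rw [div_le_iff₀ hδ0] at h3; linarith
    nlinarith
end Aux

set_option maxHeartbeats 1600000 in
/-- Inexact cut, case (g): separable objective and separable nonlinear coupling constraints,
no linear constraints. With `U = max_i ‖∇kᵢ(x̄)‖₂` and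
`η(ε, x̄) = ε + U·Diam(X)·√(2εp/α_D(x̄))`, the affine function
`C(x) = f₀(ŷ) + f₁(x̄) − η(ε, x̄) + ⟨∇f₁(x̄) + Σ μ̂ᵢ∇kᵢ(x̄), x − x̄⟩` is a cut for `𝒬` at
`x̄` and `𝒬(x̄) − C(x̄) ≤ η(ε, x̄)`. -/
theorem inexact_cut_separable_nonlinear
    {n m p : ℕ} (X : Set (E m)) (Y : Set (E n))
    (hXne : X.Nonempty) (hXcp : IsCompact X) (hXcv : Convex ℝ X)
    (hYne : Y.Nonempty) (hYcp : IsCompact Y) (hYcv : Convex ℝ Y)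
    (f₀ : E n → ℝ) (hf₀c : ConvexOn ℝ Set.univ f₀) (hf₀d : Differentiable ℝ f₀)
    (f₁ : E m → ℝ) (hf₁c : ConvexOn ℝ Set.univ f₁) (hf₁d : Differentiable ℝ f₁)
    (h : Fin p → E n → ℝ)
    (hhc : ∀ i, ConvexOn ℝ Set.univ (h i)) (hhd : ∀ i, Differentiable ℝ (h i))
    (k : Fin p → E m → ℝ)
    (hkc : ∀ i, ConvexOn ℝ Set.univ (k i)) (hkd : ∀ i, Differentiable ℝ (k i))
    -- Slater-type condition
    (hslater : ∀ x ∈ X, ∃ y ∈ Y, (¬ IsPolyhedral Y → y ∈ intrinsicInterior ℝ Y) ∧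
      ∀ i, h i y + k i x < 0)
    (xb : E m) (hxb : xb ∈ X)
    (ε : ℝ) (hε : 0 ≤ ε)
    -- strong concavity of the dual function on D_x̄ ⊆ ℝ₊^p containing the dual optima
    (αD : ℝ) (hαD : 0 < αD) (D : Set (E p)) (hDcv : Convex ℝ D)
    (hDnn : ∀ mu ∈ D, ∀ i, 0 ≤ mu i)
    (hDopt : ∀ mu : E p, (∀ i, 0 ≤ mu i) →
      (∀ mu' : E p, (∀ i, 0 ≤ mu' i) →
        thetaSep Y f₀ f₁ h k xb mu' ≤ thetaSep Y f₀ f₁ h k xb mu) →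
      mu ∈ D)
    (hconc : StrongConcaveOnE D αD (thetaSep Y f₀ f₁ h k xb))
    -- ŷ: ε-optimal feasible primal solution at x̄
    (yh : E n) (hyhY : yh ∈ Y) (hyhfeas : ∀ i, h i yh + k i xb ≤ 0)
    (hyheps : ((f₀ yh + f₁ xb : ℝ) : EReal) ≤ QvarSep Y f₀ f₁ h k xb + (ε : EReal))
    -- μ̂ ∈ D_x̄, μ̂ ≥ 0: ε-optimal dual solution at x̄
    (muh : E p) (hmuh : ∀ i, 0 ≤ muh i) (hinD : muh ∈ D)
    (hdualeps : QvarSep Y f₀ f₁ h k xb - (ε : EReal) ≤ thetaSep Y f₀ f₁ h k xb muh)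
    -- Diam(X)
    (Dm : ℝ) (hDm : IsGreatest ((fun pr : E m × E m => ‖pr.2 - pr.1‖) '' (X ×ˢ X)) Dm) :
    let U : ℝ := ⨆ i, ‖gradient (k i) xb‖
    let η : ℝ := ε + U * Dm * Real.sqrt (2 * ε * p / αD)
    let s : E m := gradient f₁ xb + ∑ i, muh i • gradient (k i) xb
    (∀ x ∈ X,
      ((f₀ yh + f₁ xb - η + ⟪s, x - xb⟫ : ℝ) : EReal) ≤ QvarSep Y f₀ f₁ h k x) ∧
    QvarSep Y f₀ f₁ h k xb ≤ ((f₀ yh + f₁ xb - η + ⟪s, xb - xb⟫ + η : ℝ) : EReal) := by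
  classical
  intro U η s
  have hUdef : U = ⨆ i, ‖gradient (k i) xb‖ := rfl
  have hηdef : η = ε + U * Dm * Real.sqrt (2 * ε * p / αD) := rfl
  have hsdef : s = gradient f₁ xb + ∑ i, muh i • gradient (k i) xb := rfl
  have hf₀cont : Continuous f₀ := hf₀d.continuous
  have hhcont : ∀ i, Continuous (h i) := fun i => (hhd i).continuous
  obtain ⟨y₀, hy₀Y, -, hy₀s⟩ := hslater xb hxb
  -- primal value is attained
  set F : Set (E n) := Y ∩ ⋂ i, {y : E n | h i y + k i xb ≤ 0} with hF
  have hFcp : IsCompact F := hYcp.inter_right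
    (isClosed_iInter fun i => isClosed_le ((hhcont i).add continuous_const) continuous_const)
  have hFne : yh ∈ F := ⟨hyhY, Set.mem_iInter.mpr hyhfeas⟩
  obtain ⟨ys, hysF, hysmin⟩ := hFcp.exists_isMinOn ⟨yh, hFne⟩
    ((hf₀cont.add continuous_const).continuousOn (f := fun y => f₀ y + f₁ xb))
  set q : ℝ := f₀ ys + f₁ xb with hq_def
  have hysY : ys ∈ Y := hysF.1
  have hysfeas : ∀ i, h i ys + k i xb ≤ 0 := fun i => Set.mem_iInter.mp hysF.2 i
  have hqQ : QvarSep Y f₀ f₁ h k xb = (q : EReal) := by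
    refine le_antisymm (QvarSep_le hysY hysfeas) (le_QvarSep fun y hy hf => ?_)
    exact EReal.coe_le_coe_iff.mpr (hysmin ⟨hy, Set.mem_iInter.mpr hf⟩)
  -- ε-primal bound in ℝ
  have hprimal : f₀ yh + f₁ xb ≤ q + ε := by
    rw [hqQ, ← EReal.coe_add] at hyheps
    exact_mod_cast hyheps
  -- dual maximizer
  obtain ⟨mustar, hmustar_nn, hmustar_max⟩ :=
    dual_max_exists (f₁ := f₁) hYcp hYne hf₀cont hhcont hy₀Y hy₀s hmuh
  have hmustarD : mustar ∈ D := hDopt mustar hmustar_nn hmustar_max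
  -- real values of the dual function
  obtain ⟨aR, haR⟩ : ∃ aR : ℝ, thetaSep Y f₀ f₁ h k xb muh = (aR : EReal) :=
    ⟨_, thetaSep_coe_toReal hYcp hYne hf₀cont hhcont⟩
  obtain ⟨bR, hbR⟩ : ∃ bR : ℝ, thetaSep Y f₀ f₁ h k xb mustar = (bR : EReal) :=
    ⟨_, thetaSep_coe_toReal hYcp hYne hf₀cont hhcont⟩
  -- ε-dual bound in ℝ
  have hdual' : q - ε ≤ aR := by
    rw [hqQ, haR, ← EReal.coe_sub] at hdualeps
    exact_mod_cast hdualeps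
  -- weak duality
  have hwd : bR ≤ q := by
    have := theta_le_Qvar (Y := Y) (f₀ := f₀) (f₁ := f₁) (h := h) (k := k)
      (x := xb) (mu := mustar) hmustar_nn
    rw [hqQ, hbR] at this
    exact_mod_cast this
  have hab : aR ≤ bR := by
    have := hmustar_max muh hmuh
    rw [haR, hbR] at this
    exact_mod_cast this
  -- strong duality
  have hsd : q ≤ bR := by
    by_contra hcon
    push_neg at hcon
    obtain ⟨mu, hmu_nn, hmu_ge⟩ := approx_strong_duality hYcv hf₀c hhc hy₀Y hy₀s hqQ
      (by linarith : (0:ℝ) < (q - bR)/2)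
    have h2 := hmu_ge.trans (hmustar_max mu hmu_nn)
    rw [hbR] at h2
    have : q - (q - bR)/2 ≤ bR := by exact_mod_cast h2
    linarith
  have hba : bR - aR ≤ ε := by linarith
  -- strong concavity ⇒ distance bound
  set N : ℝ := ‖muh - mustar‖ with hNdef
  have hN0 : 0 ≤ N := norm_nonneg _
  have hslope : ∀ t ∈ Set.Ioo (0:ℝ) 1, αD * (1 - t)/2 * N^2 ≤ bR - aR := by
    intro t ht
    have hcomb_nn : ∀ i, 0 ≤ (t • muh + (1 - t) • mustar) i := by
      intro i
      have hexp : (t • muh + (1 - t) • mustar) i = t * muh i + (1 - t) * mustar i := rfl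
      rw [hexp]
      have h1 : (0:ℝ) ≤ 1 - t := by linarith [ht.2]
      exact add_nonneg (mul_nonneg ht.1.le (hmuh i)) (mul_nonneg h1 (hmustar_nn i))
    have hle := hconc hinD (by rw [haR]; exact EReal.coe_ne_top aR)
      (by rw [haR]; exact EReal.coe_ne_bot aR) hmustarD
      (by rw [hbR]; exact EReal.coe_ne_top bR) (by rw [hbR]; exact EReal.coe_ne_bot bR)
      t ⟨ht.1.le, ht.2.le⟩
    rw [haR, hbR] at hle
    simp only [EReal.toReal_coe] at hle
    have hle2 := hle.trans (hmustar_max _ hcomb_nn)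
    rw [hbR] at hle2
    have hreal : t * aR + (1 - t) * bR + αD * t * (1 - t) / 2 * ‖muh - mustar‖^2 ≤ bR := by
      exact_mod_cast hle2
    rw [← hNdef] at hreal
    nlinarith [ht.1, ht.2]
  have hdistsq : αD/2 * N^2 ≤ bR - aR := by
    by_contra hcon
    push_neg at hcon
    have hba0 : 0 ≤ bR - aR := by linarith
    have hN2pos : 0 < N^2 := by nlinarith
    set d : ℝ := αD/2*N^2 - (bR - aR) with hd
    have hdpos : 0 < d := by rw [hd]; linarith
    set t : ℝ := min (1/2 : ℝ) (d/(αD*N^2)) with ht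
    have htpos : 0 < t := lt_min (by norm_num) (div_pos hdpos (by positivity))
    have htlt : t < 1 := lt_of_le_of_lt (min_le_left _ _) (by norm_num)
    have hs := hslope t ⟨htpos, htlt⟩
    have hkey : t * (αD/2*N^2) ≤ d/2 := by
      have h1 : t ≤ d/(αD*N^2) := min_le_right _ _
      have h2 : t * (αD/2*N^2) ≤ (d/(αD*N^2)) * (αD/2*N^2) :=
        mul_le_mul_of_nonneg_right h1 (by positivity)
      have h3 : (d/(αD*N^2)) * (αD/2*N^2) = d/2 := by
        field_simp
        exact div_self (fun h0 => by simp [h0] at hN2pos)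
      linarith
    nlinarith [hs, hkey, hdpos]
  have hNle : N ≤ Real.sqrt (2*ε/αD) := by
    refine Real.le_sqrt_of_sq_le ?_
    rw [le_div_iff₀ hαD]
    nlinarith
  -- ℓ¹–ℓ² comparison
  have hl1 : ∑ i, |muh i - mustar i| ≤ Real.sqrt p * N := by
    have hcs := Finset.sum_mul_sq_le_sq_mul_sq Finset.univ (fun _ : Fin p => (1:ℝ))
      (fun i => |muh i - mustar i|)
    have hNsq : ∑ i, (muh i - mustar i)^2 = N^2 := by
      rw [hNdef, EuclideanSpace.norm_eq, Real.sq_sqrt (by positivity)]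
      refine Finset.sum_congr rfl fun i _ => ?_
      rw [PiLp.sub_apply, Real.norm_eq_abs, sq_abs]
    have h1 : (∑ i, |muh i - mustar i|)^2 ≤ (p : ℝ) * N^2 := by
      simpa [hNsq, Finset.card_univ] using hcs
    calc ∑ i, |muh i - mustar i|
        = Real.sqrt ((∑ i, |muh i - mustar i|)^2) :=
          (Real.sqrt_sq (Finset.sum_nonneg fun i _ => abs_nonneg _)).symm
      _ ≤ Real.sqrt ((p:ℝ) * N^2) := Real.sqrt_le_sqrt h1
      _ = Real.sqrt p * N := by
          rw [Real.sqrt_mul (by positivity), Real.sqrt_sq hN0]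
  -- facts about U and Dm
  have hU_ge : ∀ i, ‖gradient (k i) xb‖ ≤ U := fun i => by
    rw [hUdef]
    exact le_ciSup (f := fun j => ‖gradient (k j) xb‖) (Set.Finite.bddAbove (Set.finite_range _)) i
  have hU0 : 0 ≤ U := by
    rcases isEmpty_or_nonempty (Fin p) with hp|hp
    · rw [hUdef, Real.iSup_of_isEmpty]
    · exact (norm_nonneg _).trans (hU_ge hp.some)
  have hDm0 : 0 ≤ Dm := by
    obtain ⟨x₀, hx₀⟩ := hXne
    have := hDm.2 ⟨(x₀, x₀), Set.mk_mem_prod hx₀ hx₀, rfl⟩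
    simpa using this
  have hdiam : ∀ x ∈ X, ‖x - xb‖ ≤ Dm := fun x hx =>
    hDm.2 ⟨(xb, x), Set.mk_mem_prod hxb hx, rfl⟩
  have hsqrtc : Real.sqrt p * Real.sqrt (2*ε/αD) = Real.sqrt (2 * ε * p / αD) := by
    rw [← Real.sqrt_mul (by positivity : (0:ℝ) ≤ (p:ℝ))]
    congr 1
    ring
  constructor
  · -- the cut is valid on X
    intro x hx
    refine le_QvarSep fun y hy hfeas => EReal.coe_le_coe_iff.mpr ?_
    set dx : E m := x - xb with hdx
    have hA1 : ∑ i, mustar i * (h i y + k i x) ≤ 0 :=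
      Finset.sum_nonpos fun i _ => mul_nonpos_of_nonneg_of_nonpos (hmustar_nn i) (hfeas i)
    have hA2 : f₁ xb + ⟪gradient f₁ xb, dx⟫ ≤ f₁ x := grad_ineq hf₁c hf₁d xb x
    have hA3 : ∀ i, k i xb + ⟪gradient (k i) xb, dx⟫ ≤ k i x := fun i =>
      grad_ineq (hkc i) (hkd i) xb x
    have hsum1 : ∑ i, mustar i * (h i y + k i xb + ⟪gradient (k i) xb, dx⟫)
        ≤ ∑ i, mustar i * (h i y + k i x) :=
      Finset.sum_le_sum fun i _ =>
        mul_le_mul_of_nonneg_left (by linarith [hA3 i]) (hmustar_nn i)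
    have hLagle : q ≤ Lag f₀ f₁ h k xb mustar y := by
      have h1 := thetaSep_le (Y := Y) (f₀ := f₀) (f₁ := f₁) (h := h) (k := k)
        (x := xb) (mu := mustar) hy
      rw [hbR] at h1
      have h2 : bR ≤ Lag f₀ f₁ h k xb mustar y := by exact_mod_cast h1
      linarith
    have hsdx : ⟪s, dx⟫ = ⟪gradient f₁ xb, dx⟫ + ∑ i, muh i * ⟪gradient (k i) xb, dx⟫ := by
      rw [hsdef, inner_add_left, sum_inner]
      congr 1
      exact Finset.sum_congr rfl fun i _ => real_inner_smul_left _ _ _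
    have hdelta : ∀ i, -(|muh i - mustar i| * (U * Dm))
        ≤ (mustar i - muh i) * ⟪gradient (k i) xb, dx⟫ := by
      intro i
      have h1 : |(mustar i - muh i) * ⟪gradient (k i) xb, dx⟫| ≤ |muh i - mustar i| * (U * Dm) := by
        rw [abs_mul, abs_sub_comm]
        refine mul_le_mul_of_nonneg_left ?_ (abs_nonneg _)
        refine (abs_real_inner_le_norm _ _).trans ?_
        exact mul_le_mul (hU_ge i) (hdiam x hx) (norm_nonneg _) hU0
      have h2 := neg_abs_le ((mustar i - muh i) * ⟪gradient (k i) xb, dx⟫)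
      linarith
    have hdsum : -(Real.sqrt (2 * ε * p / αD) * (U*Dm))
        ≤ ∑ i, (mustar i - muh i) * ⟪gradient (k i) xb, dx⟫ := by
      have h1 : ∑ i, -(|muh i - mustar i| * (U*Dm))
          ≤ ∑ i, (mustar i - muh i) * ⟪gradient (k i) xb, dx⟫ :=
        Finset.sum_le_sum fun i _ => hdelta i
      have h2 : ∑ i, -(|muh i - mustar i| * (U*Dm))
          = -((∑ i, |muh i - mustar i|) * (U*Dm)) := by
        rw [Finset.sum_mul, ← Finset.sum_neg_distrib]
      have h3 : (∑ i, |muh i - mustar i|) * (U*Dm) ≤ (Real.sqrt p * N) * (U*Dm) :=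
        mul_le_mul_of_nonneg_right hl1 (mul_nonneg hU0 hDm0)
      have h4 : (Real.sqrt p * N) * (U*Dm)
          ≤ (Real.sqrt p * Real.sqrt (2*ε/αD)) * (U*Dm) :=
        mul_le_mul_of_nonneg_right
          (mul_le_mul_of_nonneg_left hNle (Real.sqrt_nonneg _)) (mul_nonneg hU0 hDm0)
      rw [hsqrtc] at h4
      rw [h2] at h1
      linarith
    have hsplit : ∑ i, mustar i * (h i y + k i xb + ⟪gradient (k i) xb, dx⟫)
        = ∑ i, mustar i * (h i y + k i xb) + ∑ i, mustar i * ⟪gradient (k i) xb, dx⟫ := by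
      rw [← Finset.sum_add_distrib]
      exact Finset.sum_congr rfl fun i _ => by ring
    have hmusplit : ∑ i, mustar i * ⟪gradient (k i) xb, dx⟫
        = ∑ i, muh i * ⟪gradient (k i) xb, dx⟫
          + ∑ i, (mustar i - muh i) * ⟪gradient (k i) xb, dx⟫ := by
      rw [← Finset.sum_add_distrib]
      exact Finset.sum_congr rfl fun i _ => by ring
    have hLagdef : Lag f₀ f₁ h k xb mustar y
        = f₀ y + f₁ xb + ∑ i, mustar i * (h i y + k i xb) := rfl
    rw [hsdx, hηdef]
    linarith [hprimal, hA1, hA2, hsum1, hLagle, hdsum, hsplit, hmusplit,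
      hLagdef ▸ hLagle]
  · -- tightness at xb
    have h1 := QvarSep_le (Y := Y) (f₀ := f₀) (f₁ := f₁) (h := h) (k := k)
      (x := xb) hyhY hyhfeas
    refine h1.trans (EReal.coe_le_coe_iff.mpr ?_)
    have h2 : ⟪s, xb - xb⟫ = 0 := by
      rw [sub_self, inner_zero_right]
    rw [h2]
    linarith
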